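/- Let (C_0, C_1) be an equitable partition of Q_n with quotient matrix [[a,b],[c,d]] and associated function f. Then every Fourier coefficient f̂(x) with wt(x) ≠ (b+c)/2 vanishes. -/

import Mathlib

attribute [local instance] Classical.propDecidable
noncomputable section

/-- Vertices of the `n`-cube: binary words of length `n` over GF(2). -/
abbrev Vtx (n : ℕ) := Fin n → ZMod 2

/-- The (Hamming) weight of a word: the number of ones. -/
def wt {n : ℕ} (x : Vtx n) : ℕ := (Finset.univ.filter (fun i => x i = 1)).card

/-- The inner product `x₁y₁ + ⋯ + xₙyₙ` computed as a natural number. -/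
def ip {n : ℕ} (x y : Vtx n) : ℕ := ∑ i, (x i).val * (y i).val

/-- The character `χ_y(x) = (−1)^⟨x,y⟩`. -/
def chi {n : ℕ} (y x : Vtx n) : ℚ := (-1) ^ ip x y

/-- `leq z x` means `z ≼ x`, i.e. `zᵢ ≤ xᵢ` for all `i`. -/
def leq {n : ℕ} (x y : Vtx n) : Prop := ∀ i, (x i).val ≤ (y i).val

/-- The Fourier coefficient `f̂(y) = 2^{−n} Σ_z f(z)(−1)^⟨z,y⟩`. -/
def hat {n : ℕ} (f : Vtx n → ℚ) (y : Vtx n) : ℚ :=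
  (∑ z, f z * (-1 : ℚ) ^ ip z y) / 2 ^ n

/-- Adjacency in the `n`-cube: the words differ in exactly one coordinate. -/
def adj {n : ℕ} (x y : Vtx n) : Prop :=
  (Finset.univ.filter (fun i => x i ≠ y i)).card = 1

/-- `(C0, complement of C0)` is an equitable partition with quotient matrix
`[[a,b],[c,d]]`. -/
def IsEqPartition {n : ℕ} (C0 : Finset (Vtx n)) (a b c d : ℕ) : Prop :=
  (∀ x ∈ C0, (Finset.univ.filter (fun y => adj x y ∧ y ∈ C0)).card = a ∧
             (Finset.univ.filter (fun y => adj x y ∧ y ∉ C0)).card = b) ∧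
  (∀ x ∉ C0, (Finset.univ.filter (fun y => adj x y ∧ y ∈ C0)).card = c ∧
             (Finset.univ.filter (fun y => adj x y ∧ y ∉ C0)).card = d)

/-- The associated function of an equitable partition: `b` on `C0`, `−c` outside. -/
def assoc {n : ℕ} (C0 : Finset (Vtx n)) (b c : ℕ) : Vtx n → ℚ :=
  fun x => if x ∈ C0 then (b : ℚ) else -(c : ℚ)

/-- The face `Γ_u^v = {z + v : z ≼ u}` (of dimension `wt u`). -/
def face {n : ℕ} (u v : Vtx n) : Finset (Vtx n) :=
  Finset.univ.filter (fun x => ∃ z, leq z u ∧ x = z + v)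

namespace Stmt5Aux

variable {n : ℕ}

def flp (z : Vtx n) (i : Fin n) : Vtx n := Function.update z i (z i + 1)

lemma flp_apply (z : Vtx n) (i j : Fin n) :
    flp z i j = if j = i then z i + 1 else z j := Function.update_apply ..

lemma zmod2_cases (u : ZMod 2) : u = 0 ∨ u = 1 := by revert u; decide

lemma add_one_ne (u : ZMod 2) : u + 1 ≠ u := by revert u; decide

lemma ne_imp (u v : ZMod 2) (h : u ≠ v) : v = u + 1 := by revert u v; decide

lemma flp_flp (z : Vtx n) (i : Fin n) : flp (flp z i) i = z := by
  funext j
  rcases eq_or_ne j i with rfl | hj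
  · show Function.update (flp z j) j ((flp z j) j + 1) j = z j
    rw [Function.update_self, flp, Function.update_self, add_assoc]
    have h2 : (1 + 1 : ZMod 2) = 0 := by decide
    rw [h2, add_zero]
  · rw [flp, Function.update_of_ne hj, flp, Function.update_of_ne hj]

lemma adj_iff (z y : Vtx n) : adj z y ↔ ∃ i, y = flp z i := by
  constructor
  · intro hzy
    obtain ⟨i, hi⟩ := Finset.card_eq_one.mp hzy
    refine ⟨i, funext fun j => ?_⟩
    by_cases hj : j = i
    · subst hj
      have : j ∈ Finset.univ.filter (fun i => z i ≠ y i) := hi ▸ Finset.mem_singleton_self j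
      have hne : z j ≠ y j := (Finset.mem_filter.mp this).2
      rw [flp_apply, if_pos rfl]
      exact ne_imp _ _ hne
    · have : j ∉ Finset.univ.filter (fun i => z i ≠ y i) := by
        rw [hi]; simpa using hj
      have heq : ¬ z j ≠ y j := fun hne => this (Finset.mem_filter.mpr ⟨Finset.mem_univ j, hne⟩)
      rw [flp_apply, if_neg hj]
      exact (not_not.mp heq).symm
  · rintro ⟨i, rfl⟩
    have : Finset.univ.filter (fun j => z j ≠ flp z i j) = {i} := by
      ext j
      simp only [Finset.mem_filter, Finset.mem_univ, true_and, Finset.mem_singleton, flp_apply]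
      by_cases hj : j = i
      · subst hj; simp [(add_one_ne (z j)).symm]
      · simp [hj]
    rw [adj, this, Finset.card_singleton]

lemma flp_inj (z : Vtx n) : Function.Injective (flp z) := by
  intro i j hij
  by_contra hne
  have h1 := congrFun hij i
  rw [flp_apply, if_pos rfl, flp_apply, if_neg hne] at h1
  exact add_one_ne (z i) h1

lemma card_nbr (z : Vtx n) (P : Vtx n → Prop) :
    (Finset.univ.filter (fun y => adj z y ∧ P y)).card
      = (Finset.univ.filter (fun i => P (flp z i))).card := by
  have himg : Finset.univ.filter (fun y => adj z y ∧ P y)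
      = Finset.image (flp z) (Finset.univ.filter (fun i => P (flp z i))) := by
    ext y
    simp only [Finset.mem_filter, Finset.mem_univ, true_and, Finset.mem_image, adj_iff]
    constructor
    · rintro ⟨⟨i, rfl⟩, hP⟩; exact ⟨i, hP, rfl⟩
    · rintro ⟨i, hP, rfl⟩; exact ⟨⟨i, rfl⟩, hP⟩
  rw [himg, Finset.card_image_of_injective _ (flp_inj z)]

lemma card_nbr' (z : Vtx n) (P : Vtx n → Prop) :
    (Finset.univ.filter (fun i => P (flp z i))).card
      = (Finset.univ.filter (fun y => adj z y ∧ P y)).card := (card_nbr z P).symm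

lemma chi_flip (w : Vtx n) (i : Fin n) (x : Vtx n) :
    ((-1 : ℚ)) ^ ip (flp w i) x = (-1) ^ ip w x * (-1) ^ ((x i).val) := by
  unfold ip
  rw [← Finset.prod_pow_eq_pow_sum, ← Finset.prod_pow_eq_pow_sum]
  rw [← Finset.mul_prod_erase _ _ (Finset.mem_univ i),
      ← Finset.mul_prod_erase _ (fun j => ((-1:ℚ)) ^ ((w j).val * (x j).val)) (Finset.mem_univ i)]
  have hrest : ∀ j ∈ Finset.univ.erase i,
      ((-1:ℚ)) ^ ((flp w i j).val * (x j).val) = (-1) ^ ((w j).val * (x j).val) := by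
    intro j hj
    rw [flp_apply, if_neg (Finset.mem_erase.mp hj).1]
  rw [Finset.prod_congr rfl hrest]
  have hi : ((-1:ℚ)) ^ ((flp w i i).val * (x i).val)
      = (-1) ^ ((w i).val * (x i).val) * (-1) ^ ((x i).val) := by
    rw [flp_apply, if_pos rfl]
    rcases zmod2_cases (w i) with hw | hw <;> rcases zmod2_cases (x i) with hx | hx <;>
      simp [hw, hx, show ((0 : ZMod 2) + 1) = 1 by decide, show ((1 : ZMod 2) + 1) = 0 by decide,
        show (0 : ZMod 2).val = 0 from rfl, show (1 : ZMod 2).val = 1 from rfl]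
  rw [hi]; ring

lemma sum_char (x : Vtx n) :
    (∑ i : Fin n, ((-1 : ℚ)) ^ ((x i).val)) = (n : ℚ) - 2 * wt x := by
  rw [← Finset.sum_filter_add_sum_filter_not Finset.univ (fun i => x i = 1)]
  have h1 : ∀ i ∈ Finset.univ.filter (fun i => x i = 1), ((-1:ℚ)) ^ ((x i).val) = -1 := by
    intro i hi
    have : x i = 1 := (Finset.mem_filter.mp hi).2
    rw [this]
    have hv : (1 : ZMod 2).val = 1 := rfl
    rw [hv]; norm_num
  have h2 : ∀ i ∈ Finset.univ.filter (fun i => ¬ x i = 1), ((-1:ℚ)) ^ ((x i).val) = 1 := by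
    intro i hi
    have hne : ¬ x i = 1 := (Finset.mem_filter.mp hi).2
    have : x i = 0 := (zmod2_cases (x i)).resolve_right hne
    rw [this]
    have hv : (0 : ZMod 2).val = 0 := rfl
    rw [hv]; norm_num
  rw [Finset.sum_congr rfl h1, Finset.sum_congr rfl h2, Finset.sum_const, Finset.sum_const]
  have hcard := Finset.card_filter_add_card_filter_not (s := Finset.univ)
    (p := fun i : Fin n => x i = 1)
  simp only [Finset.card_univ, Fintype.card_fin] at hcard
  have hwt : (Finset.univ.filter (fun i => x i = 1)).card = wt x := rfl
  rw [hwt] at hcard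
  have : (Finset.univ.filter (fun i => ¬ x i = 1)).card = n - wt x := by omega
  rw [hwt, this]
  have hle : wt x ≤ n := by omega
  rw [nsmul_eq_mul, nsmul_eq_mul, Nat.cast_sub hle]
  ring

end Stmt5Aux

open Stmt5Aux in
theorem stmt5 (n a b c d : ℕ) (C0 : Finset (Vtx n))
    (h : IsEqPartition C0 a b c d) (hab : a + b = n) (hcd : c + d = n) :
    ∀ x : Vtx n, 2 * wt x ≠ b + c → hat (assoc C0 b c) x = 0 := by
  intro x hx
  set f : Vtx n → ℚ := assoc C0 b c with hf
  set S : ℚ := ∑ z, f z * (-1 : ℚ) ^ ip z x with hS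
  -- eigenfunction property
  have heigen : ∀ z : Vtx n, (∑ i : Fin n, f (flp z i)) = ((n : ℚ) - b - c) * f z := by
    intro z
    have hIn : ∀ i ∈ Finset.univ.filter (fun i => flp z i ∈ C0), f (flp z i) = (b : ℚ) := by
      intro i hi
      have : flp z i ∈ C0 := (Finset.mem_filter.mp hi).2
      simp [hf, assoc, this]
    have hOut : ∀ i ∈ Finset.univ.filter (fun i => flp z i ∉ C0), f (flp z i) = -(c : ℚ) := by
      intro i hi
      have : flp z i ∉ C0 := (Finset.mem_filter.mp hi).2
      simp [hf, assoc, this]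
    have hsum : (∑ i : Fin n, f (flp z i))
        = ((Finset.univ.filter (fun i => flp z i ∈ C0)).card : ℚ) * b
          - ((Finset.univ.filter (fun i => flp z i ∉ C0)).card : ℚ) * c := by
      rw [← Finset.sum_filter_add_sum_filter_not Finset.univ (fun i => flp z i ∈ C0)
        (fun i => f (flp z i))]
      rw [Finset.sum_congr rfl hIn, Finset.sum_congr rfl hOut, Finset.sum_const,
        Finset.sum_const, nsmul_eq_mul, nsmul_eq_mul]
      ring
    have e1 : (Finset.univ.filter (fun i => flp z i ∈ C0)).card
        = (Finset.univ.filter (fun y => adj z y ∧ y ∈ C0)).card := by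
      have h' := card_nbr' z (· ∈ C0)
      convert h' using 2 <;> congr!
    have e2 : (Finset.univ.filter (fun i => flp z i ∉ C0)).card
        = (Finset.univ.filter (fun y => adj z y ∧ y ∉ C0)).card := by
      have h' := card_nbr' z (· ∉ C0)
      convert h' using 2 <;> congr!
    rw [e1, e2] at hsum
    by_cases hz : z ∈ C0
    · obtain ⟨hA, hB⟩ := h.1 z hz
      rw [hA, hB] at hsum
      have hfz : f z = (b : ℚ) := by simp [hf, assoc, hz]
      have ha : (a : ℚ) = n - b := by
        have : ((a : ℚ) + b) = n := by exact_mod_cast congrArg (Nat.cast : ℕ → ℚ) hab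
        linarith
      rw [hsum, hfz, ha]; ring
    · obtain ⟨hC, hD⟩ := h.2 z hz
      rw [hC, hD] at hsum
      have hfz : f z = -(c : ℚ) := by simp [hf, assoc, hz]
      have hd : (d : ℚ) = n - c := by
        have : ((c : ℚ) + d) = n := by exact_mod_cast congrArg (Nat.cast : ℕ → ℚ) hcd
        linarith
      rw [hsum, hfz, hd]; ring
  -- common double sum
  have T2 : (∑ z, (∑ i : Fin n, f (flp z i)) * (-1 : ℚ) ^ ip z x)
      = ((n : ℚ) - b - c) * S := by
    rw [hS, Finset.mul_sum]
    refine Finset.sum_congr rfl fun z _ => ?_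
    rw [heigen z]; ring
  have T1 : (∑ z, (∑ i : Fin n, f (flp z i)) * (-1 : ℚ) ^ ip z x)
      = ((n : ℚ) - 2 * wt x) * S := by
    have hswap : (∑ z, (∑ i : Fin n, f (flp z i)) * (-1 : ℚ) ^ ip z x)
        = ∑ i : Fin n, ∑ z, f (flp z i) * (-1 : ℚ) ^ ip z x := by
      rw [Finset.sum_comm]
      exact Finset.sum_congr rfl fun z _ => by rw [Finset.sum_mul]
    rw [hswap]
    have hfix : ∀ i : Fin n, (∑ z, f (flp z i) * (-1 : ℚ) ^ ip z x)
        = (-1 : ℚ) ^ ((x i).val) * S := by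
      intro i
      have hinv : Function.Involutive (fun z : Vtx n => flp z i) := fun z => flp_flp z i
      have := Function.Bijective.sum_comp (hinv.bijective)
        (fun w => f w * (-1 : ℚ) ^ ip (flp w i) x)
      calc (∑ z, f (flp z i) * (-1 : ℚ) ^ ip z x)
          = ∑ z, f (flp z i) * (-1 : ℚ) ^ ip (flp (flp z i) i) x := by
            refine Finset.sum_congr rfl fun z _ => by rw [flp_flp]
        _ = ∑ w, f w * (-1 : ℚ) ^ ip (flp w i) x := this
        _ = ∑ w, (-1 : ℚ) ^ ((x i).val) * (f w * (-1 : ℚ) ^ ip w x) := by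
            refine Finset.sum_congr rfl fun w _ => by rw [chi_flip]; ring
        _ = (-1 : ℚ) ^ ((x i).val) * S := by rw [← Finset.mul_sum, hS]
    rw [Finset.sum_congr rfl fun i _ => hfix i, ← Finset.sum_mul, sum_char]
  -- conclude
  have hkey : ((n : ℚ) - 2 * wt x - ((n : ℚ) - b - c)) * S = 0 := by
    rw [sub_mul, T1.symm.trans T2]; ring
  have hne : ((n : ℚ) - 2 * wt x - ((n : ℚ) - b - c)) ≠ 0 := by
    intro hcontra
    apply hx
    have : (2 * wt x : ℚ) = (b : ℚ) + c := by linarith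
    exact_mod_cast this
  have hS0 : S = 0 := by
    rcases mul_eq_zero.mp hkey with h' | h'
    · exact absurd h' hne
    · exact h'
  rw [hat, ← hS, hS0, zero_div]
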